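/- Suppose $T \subseteq \mathbb{Q}$ satisfies: $t \in T$ if and only if there exist $x_1, \ldots, x_m \in \mathbb{Q}$ such that $f(t, x_1, \ldots, x_m) = 0$ and $g_j(t, x_1, \ldots, x_m) \in \square^*$ for $j = 1, \ldots, \ell$, where $f, g_1, \ldots, g_\ell \in \mathbb{Z}[t, x_1, \ldots, x_m]$ and $\square^* = \{r^2 : r \in \mathbb{Q}^*\}$. Then there exists a polynomial $P \in \mathbb{Z}[t, x_1, \ldots, x_{m+2}]$ such that $t \in T$ if and only if $\exists x_1 \cdots \exists x_{m+2} \in \mathbb{Q}$ with $P(t, x_1, \ldots, x_{m+2}) = 0$; in other words, conditions involving $\ell$ nonzero-square constraints can be combined into a single polynomial equation at the cost of only two extra existential variables. -/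

import Mathlib

open Polynomial Finset

namespace JPwork

variable {R : Type*} [CommRing R] {S : Type*} [CommRing S]



variable {R : Type*} [CommRing R] {S : Type*} [CommRing S]

noncomputable def cc (R : Type*) [CommRing R] : R →+* Polynomial (Polynomial R) :=
  Polynomial.C.comp Polynomial.C

noncomputable def P₁ (p : Polynomial R) : Polynomial (Polynomial R) :=
  p.eval₂ (cc R) (Polynomial.C Polynomial.X - Polynomial.X)

noncomputable def P₂ (p : Polynomial R) : Polynomial (Polynomial R) :=
  p.eval₂ (cc R) (Polynomial.C Polynomial.X + Polynomial.X)

lemma coeff_term (k : ℕ) (w : Polynomial R) (c : ℕ) (j : ℕ) :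
    ((Polynomial.X : Polynomial (Polynomial R)) ^ k * Polynomial.C w * (c : Polynomial (Polynomial R))).coeff j
      = if k = j then c • w else 0 := by
  have h : (Polynomial.X : Polynomial (Polynomial R)) ^ k * Polynomial.C w * (c : Polynomial (Polynomial R))
      = Polynomial.C (w * (c : Polynomial R)) * Polynomial.X ^ k := by
    rw [map_mul, Polynomial.C_eq_natCast]
    ring
  rw [h, Polynomial.coeff_C_mul, Polynomial.coeff_X_pow]
  by_cases hkj : k = j
  · simp [hkj, nsmul_eq_mul, mul_comm]
  · simp [hkj, Ne.symm hkj]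

lemma coeff_u2_pow (n j : ℕ) :
    ((Polynomial.C Polynomial.X + Polynomial.X : Polynomial (Polynomial R)) ^ n).coeff j
      = (n.choose j) • (Polynomial.X : Polynomial R) ^ (n - j) := by
  rw [add_comm, add_pow, finset_sum_coeff]
  have h : ∀ k ∈ Finset.range (n+1),
      ((Polynomial.X : Polynomial (Polynomial R)) ^ k * Polynomial.C Polynomial.X ^ (n-k)
        * (n.choose k : Polynomial (Polynomial R))).coeff j
      = if k = j then (n.choose j) • (Polynomial.X : Polynomial R) ^ (n - j) else 0 := by
    intro k _
    rw [← Polynomial.C_pow, coeff_term]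
    by_cases hkj : k = j <;> simp [hkj]
  rw [Finset.sum_congr rfl h, Finset.sum_ite_eq' (Finset.range (n+1)) j]
  by_cases hj : j ∈ Finset.range (n+1)
  · simp [hj]
  · simp only [hj, if_false]
    rw [Finset.mem_range, not_lt] at hj
    rw [Nat.choose_eq_zero_of_lt (by omega), zero_smul]

lemma coeff_u1_pow (n j : ℕ) :
    ((Polynomial.C Polynomial.X - Polynomial.X : Polynomial (Polynomial R)) ^ n).coeff j
      = (-1 : Polynomial R) ^ j * ((n.choose j) • (Polynomial.X : Polynomial R) ^ (n - j)) := by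
  have h : (Polynomial.C Polynomial.X - Polynomial.X : Polynomial (Polynomial R))
      = (-Polynomial.X) + Polynomial.C Polynomial.X := by ring
  rw [h, add_pow, finset_sum_coeff]
  have h2 : ∀ k ∈ Finset.range (n+1),
      ((-Polynomial.X : Polynomial (Polynomial R)) ^ k * Polynomial.C Polynomial.X ^ (n-k)
        * (n.choose k : Polynomial (Polynomial R))).coeff j
      = if k = j then (-1 : Polynomial R) ^ j * ((n.choose j) • (Polynomial.X : Polynomial R) ^ (n - j)) else 0 := by
    intro k _
    have he : ((-Polynomial.X : Polynomial (Polynomial R)) ^ k * Polynomial.C Polynomial.X ^ (n-k)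
        * (n.choose k : Polynomial (Polynomial R)))
        = Polynomial.C ((-1 : Polynomial R) ^ k) *
          ((Polynomial.X : Polynomial (Polynomial R)) ^ k * Polynomial.C Polynomial.X ^ (n-k)
            * (n.choose k : Polynomial (Polynomial R))) := by
      rw [map_pow, map_neg, map_one]
      ring
    rw [he, Polynomial.coeff_C_mul, ← Polynomial.C_pow, coeff_term]
    by_cases hkj : k = j
    · simp [hkj]
    · simp [hkj]
  rw [Finset.sum_congr rfl h2, Finset.sum_ite_eq' (Finset.range (n+1)) j]
  by_cases hj : j ∈ Finset.range (n+1)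
  · simp [hj]
  · simp only [hj, if_false]
    rw [Finset.mem_range, not_lt] at hj
    rw [Nat.choose_eq_zero_of_lt (by omega), zero_smul, mul_zero]


variable {R : Type*} [CommRing R] {S : Type*} [CommRing S]



lemma coeff_eval₂ (p : Polynomial R) (u : Polynomial (Polynomial R)) (j : ℕ) :
    (p.eval₂ (cc R) u).coeff j
      = ∑ n ∈ Finset.range (p.natDegree + 1), Polynomial.C (p.coeff n) * (u ^ n).coeff j := by
  rw [eval₂_eq_sum_range, finset_sum_coeff]
  refine Finset.sum_congr rfl fun n _ => ?_
  show ((Polynomial.C (Polynomial.C (p.coeff n))) * u ^ n).coeff j = _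
  rw [Polynomial.coeff_C_mul]

lemma coeff_P₁ (p : Polynomial R) (j : ℕ) :
    (P₁ p).coeff j = (-1 : Polynomial R) ^ j * (P₂ p).coeff j := by
  rw [P₁, P₂, coeff_eval₂, coeff_eval₂, Finset.mul_sum]
  refine Finset.sum_congr rfl fun n _ => ?_
  rw [coeff_u1_pow, coeff_u2_pow, mul_left_comm]

lemma natDegree_coeff_P₂ (p : Polynomial R) (j : ℕ) :
    ((P₂ p).coeff j).natDegree ≤ p.natDegree := by
  rw [P₂, coeff_eval₂]
  refine natDegree_sum_le_of_forall_le _ _ fun n hn => ?_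
  refine (natDegree_C_mul_le _ _).trans ?_
  rw [coeff_u2_pow, nsmul_eq_mul]
  refine natDegree_mul_le.trans ?_
  rw [natDegree_natCast, zero_add]
  refine natDegree_pow_le.trans ?_
  rw [Finset.mem_range] at hn
  have hX := natDegree_X_le (R := R)
  calc (n - j) * (Polynomial.X : Polynomial R).natDegree ≤ (n-j) * 1 := Nat.mul_le_mul_left _ hX
    _ ≤ _ := by omega

lemma natDegree_coeff_P₁ (p : Polynomial R) (j : ℕ) :
    ((P₁ p).coeff j).natDegree ≤ p.natDegree := by
  rw [coeff_P₁]
  refine (natDegree_mul_le).trans ?_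
  have h1 : ((-1 : Polynomial R) ^ j).natDegree = 0 := by
    rw [← Polynomial.C_1, ← Polynomial.C_neg, ← Polynomial.C_pow, natDegree_C]
  rw [h1, zero_add]
  exact natDegree_coeff_P₂ p j

lemma natDegree_P₂ (p : Polynomial R) : (P₂ p).natDegree ≤ p.natDegree := by
  rw [P₂, eval₂_eq_sum_range]
  refine natDegree_sum_le_of_forall_le _ _ fun n hn => ?_
  show ((Polynomial.C (Polynomial.C (p.coeff n))) * _ ^ n).natDegree ≤ _
  refine (natDegree_C_mul_le _ _).trans (natDegree_pow_le.trans ?_)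
  have : (Polynomial.C Polynomial.X + Polynomial.X : Polynomial (Polynomial R)).natDegree ≤ 1 := by
    refine (natDegree_add_le _ _).trans ?_
    simp [natDegree_X_le]
  rw [Finset.mem_range] at hn
  calc n * _ ≤ n * 1 := Nat.mul_le_mul_left n this
    _ ≤ _ := by omega

lemma natDegree_P₁ (p : Polynomial R) : (P₁ p).natDegree ≤ p.natDegree := by
  rw [P₁, eval₂_eq_sum_range]
  refine natDegree_sum_le_of_forall_le _ _ fun n hn => ?_
  show ((Polynomial.C (Polynomial.C (p.coeff n))) * _ ^ n).natDegree ≤ _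
  refine (natDegree_C_mul_le _ _).trans (natDegree_pow_le.trans ?_)
  have : (Polynomial.C Polynomial.X - Polynomial.X : Polynomial (Polynomial R)).natDegree ≤ 1 := by
    refine (natDegree_sub_le _ _).trans ?_
    simp [natDegree_X_le]
  rw [Finset.mem_range] at hn
  calc n * _ ≤ n * 1 := Nat.mul_le_mul_left n this
    _ ≤ _ := by omega

lemma coeff_mul_odd (p : Polynomial R) {n : ℕ} (hn : Odd n) :
    (P₁ p * P₂ p).coeff n = 0 := by
  rw [Polynomial.coeff_mul]
  refine Finset.sum_involution (fun a _ => (a.2, a.1)) ?_ ?_ ?_ ?_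
  · rintro ⟨i, j⟩ hij
    simp only
    rw [Finset.HasAntidiagonal.mem_antidiagonal] at hij
    rw [coeff_P₁ p i, coeff_P₁ p j]
    have hodd : Odd (i + j) := hij ▸ hn
    have hpar : (-1 : Polynomial R) ^ i = -(-1 : Polynomial R) ^ j := by
      rcases Nat.even_or_odd i with hi | hi
      · have hj : Odd j := by
          rcases Nat.even_or_odd j with hj | hj
          · exact absurd (hi.add hj) (Nat.not_even_iff_odd.mpr hodd)
          · exact hj
        rw [hi.neg_one_pow, hj.neg_one_pow, neg_neg]
      · have hj : Even j := by
          rcases Nat.even_or_odd j with hj | hj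
          · exact hj
          · exact absurd (Odd.add_odd hi hj) (Nat.not_even_iff_odd.mpr hodd)
        rw [hi.neg_one_pow, hj.neg_one_pow]
    rw [hpar]; ring
  · rintro ⟨i, j⟩ hij _
    simp only [Prod.mk.injEq, ne_eq, not_and]
    rw [Finset.HasAntidiagonal.mem_antidiagonal] at hij
    intro h1 h2
    obtain ⟨w, hw⟩ := hn
    omega
  · rintro ⟨i, j⟩ hij
    show (j, i) ∈ antidiagonal n
    rw [Finset.HasAntidiagonal.mem_antidiagonal] at hij ⊢
    omega
  · rintro ⟨i, j⟩ _; rfl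


variable {R : Type*} [CommRing R] {S : Type*} [CommRing S]



noncomputable def step (B : ℕ) (p : Polynomial R) (a : R) : Polynomial R :=
  ∑ i ∈ Finset.range (B+1), (P₁ p * P₂ p).coeff (2*i) * (Polynomial.C a)^i

lemma natDegree_coeff_F (p : Polynomial R) (n : ℕ) :
    ((P₁ p * P₂ p).coeff n).natDegree ≤ 2 * p.natDegree := by
  rw [Polynomial.coeff_mul]
  refine natDegree_sum_le_of_forall_le _ _ fun ij _ => ?_
  refine natDegree_mul_le.trans ?_
  have := natDegree_coeff_P₁ p ij.1
  have := natDegree_coeff_P₂ p ij.2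
  omega

lemma natDegree_step (B : ℕ) (p : Polynomial R) (a : R) :
    (step B p a).natDegree ≤ 2 * p.natDegree := by
  refine natDegree_sum_le_of_forall_le _ _ fun i _ => ?_
  refine natDegree_mul_le.trans ?_
  have h1 := natDegree_coeff_F p (2*i)
  have h2 : ((Polynomial.C a : Polynomial R) ^ i).natDegree ≤ 0 := by
    refine natDegree_pow_le.trans ?_
    simp [natDegree_C]
  omega

lemma sum_range_even {M : Type*} [AddCommMonoid M] (f : ℕ → M) (B : ℕ)
    (h : ∀ n, Odd n → f n = 0) :
    ∑ n ∈ Finset.range (2*B+1), f n = ∑ i ∈ Finset.range (B+1), f (2*i) := by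
  induction B with
  | zero => simp
  | succ B ih =>
    have e1 : 2*(B+1)+1 = (2*B+1) + 1 + 1 := by ring
    rw [e1, Finset.sum_range_succ, Finset.sum_range_succ, ih,
      Finset.sum_range_succ (fun i => f (2*i)) (B+1),
      h (2*B+1) ⟨B, by ring⟩]
    have : 2*B+1+1 = 2*(B+1) := by ring
    rw [this, add_zero]

lemma eval_P₁ (p : Polynomial R) (s : R) :
    (P₁ p).eval (Polynomial.C s) = p.comp (Polynomial.X - Polynomial.C s) := by
  show (Polynomial.evalRingHom (Polynomial.C s)) (p.eval₂ (cc R) _) = _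
  rw [hom_eval₂]
  have h1 : (Polynomial.evalRingHom (Polynomial.C s)).comp (cc R)
      = (Polynomial.C : R →+* Polynomial R) := by
    ext c; simp [cc]
  have h2 : (Polynomial.evalRingHom (Polynomial.C s))
      (Polynomial.C Polynomial.X - Polynomial.X) = Polynomial.X - Polynomial.C s := by
    simp
  rw [h1, h2, Polynomial.comp]

lemma eval_P₂ (p : Polynomial R) (s : R) :
    (P₂ p).eval (Polynomial.C s) = p.comp (Polynomial.X + Polynomial.C s) := by
  show (Polynomial.evalRingHom (Polynomial.C s)) (p.eval₂ (cc R) _) = _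
  rw [hom_eval₂]
  have h1 : (Polynomial.evalRingHom (Polynomial.C s)).comp (cc R)
      = (Polynomial.C : R →+* Polynomial R) := by
    ext c; simp [cc]
  have h2 : (Polynomial.evalRingHom (Polynomial.C s))
      (Polynomial.C Polynomial.X + Polynomial.X) = Polynomial.X + Polynomial.C s := by
    simp
  rw [h1, h2, Polynomial.comp]

lemma step_spec {B : ℕ} {p : Polynomial R} (hB : p.natDegree ≤ B) (s : R) :
    step B p (s^2)
      = p.comp (Polynomial.X - Polynomial.C s) * p.comp (Polynomial.X + Polynomial.C s) := by
  have hFdeg : (P₁ p * P₂ p).natDegree < 2*B+1 := by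
    have := natDegree_mul_le (p := P₁ p) (q := P₂ p)
    have := natDegree_P₁ p
    have := natDegree_P₂ p
    omega
  rw [← eval_P₁, ← eval_P₂, ← Polynomial.eval_mul,
    Polynomial.eval_eq_sum_range' hFdeg,
    sum_range_even (fun n => (P₁ p * P₂ p).coeff n * Polynomial.C s ^ n) B
      (fun n hn => by show (P₁ p * P₂ p).coeff n * _ = 0; rw [coeff_mul_odd p hn, zero_mul])]
  refine Finset.sum_congr rfl fun i _ => ?_
  simp [pow_mul, map_pow]

lemma step_map (φ : R →+* S) (B : ℕ) (p : Polynomial R) (a : R) :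
    (step B p a).map φ = step B (p.map φ) (φ a) := by
  have hP₁ : P₁ (p.map φ) = (P₁ p).map (Polynomial.mapRingHom φ) := by
    rw [P₁, P₁, Polynomial.eval₂_map]
    show _ = (Polynomial.mapRingHom (Polynomial.mapRingHom φ)) (p.eval₂ (cc R) _)
    rw [hom_eval₂]
    congr 1
    · ext c
      simp [cc]
    · simp
  have hP₂ : P₂ (p.map φ) = (P₂ p).map (Polynomial.mapRingHom φ) := by
    rw [P₂, P₂, Polynomial.eval₂_map]
    show _ = (Polynomial.mapRingHom (Polynomial.mapRingHom φ)) (p.eval₂ (cc R) _)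
    rw [hom_eval₂]
    congr 1
    · ext c
      simp [cc]
    · simp
  rw [step, step, Polynomial.map_sum]
  refine Finset.sum_congr rfl fun i _ => ?_
  rw [Polynomial.map_mul, Polynomial.map_pow, Polynomial.map_C, hP₁, hP₂,
    ← Polynomial.map_mul, Polynomial.coeff_map]
  rfl

noncomputable def JP : (k : ℕ) → (Fin k → R) → Polynomial R
  | 0, _ => Polynomial.X
  | (k+1), A => step (2^k) (JP k (fun i => A i.castSucc)) (A (Fin.last k))

lemma JP_natDegree : ∀ (k : ℕ) (A : Fin k → R), (JP k A).natDegree ≤ 2^k := by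
  intro k
  induction k with
  | zero => intro A; simpa [JP] using natDegree_X_le
  | succ k ih =>
    intro A
    rw [JP]
    refine (natDegree_step _ _ _).trans ?_
    have := ih (fun i => A i.castSucc)
    rw [pow_succ]
    omega

lemma JP_map (φ : R →+* S) : ∀ (k : ℕ) (A : Fin k → R),
    (JP k A).map φ = JP k (φ ∘ A) := by
  intro k
  induction k with
  | zero => intro A; simp [JP]
  | succ k ih =>
    intro A
    rw [JP, JP, step_map, ih]
    rfl

lemma JP_succ {k : ℕ} (A : Fin (k+1) → R) (s : R) (h : A (Fin.last k) = s^2) :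
    JP (k+1) A
      = (JP k (fun i => A i.castSucc)).comp (Polynomial.X - Polynomial.C s)
        * (JP k (fun i => A i.castSucc)).comp (Polynomial.X + Polynomial.C s) := by
  rw [JP, h, step_spec (JP_natDegree k _) s]


lemma JP_zero (A : Fin 0 → R) : JP 0 A = Polynomial.X := rfl

lemma JP_forward : ∀ (k : ℕ) (r : Fin k → ℚ), (∀ j, 0 < r j) →
    (JP k (fun j => r j ^ 2)).eval (∑ j, r j) = 0 ∧
    0 < (derivative (JP k (fun j => r j ^ 2))).eval (∑ j, r j) ∧
    ∀ y : ℚ, (∑ j, r j) < y → 0 < (JP k (fun j => r j ^ 2)).eval y := by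
  intro k
  induction k with
  | zero =>
    intro r _
    refine ⟨by simp [JP_zero], by simp [JP_zero], fun y hy => by simpa [JP_zero] using hy⟩
  | succ k ih =>
    intro r hr
    set r' : Fin k → ℚ := fun i => r i.castSucc with hr'
    obtain ⟨h0, h1, h2⟩ := ih r' (fun j => hr _)
    set s := r (Fin.last k) with hs
    have hs0 : 0 < s := hr _
    have hsum : (∑ j, r j) = (∑ j, r' j) + s := Fin.sum_univ_castSucc r
    have hJ := JP_succ (fun j => r j ^ 2) s rfl
    have hfuneq : (fun i : Fin k => (fun j : Fin (k+1) => r j ^ 2) i.castSucc)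
        = fun i => r' i ^ 2 := rfl
    rw [hfuneq] at hJ
    set p := JP k (fun i => r' i ^ 2) with hp
    set Ssum := ∑ j, r' j with hSsum
    refine ⟨?_, ?_, ?_⟩
    · rw [hJ, Polynomial.eval_mul, Polynomial.eval_comp]
      simp only [Polynomial.eval_sub, Polynomial.eval_X, Polynomial.eval_C, hsum]
      rw [show Ssum + s - s = Ssum by ring, h0, zero_mul]
    · rw [hJ, derivative_mul, Polynomial.eval_add, Polynomial.eval_mul, Polynomial.eval_mul,
        derivative_comp, derivative_comp]
      simp only [derivative_sub, derivative_add, derivative_X, derivative_C, sub_zero, add_zero,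
        Polynomial.eval_mul, Polynomial.eval_comp, Polynomial.eval_one, one_mul,
        Polynomial.eval_sub, Polynomial.eval_add, Polynomial.eval_X, Polynomial.eval_C, hsum]
      rw [show Ssum + s - s = Ssum by ring, h0, zero_mul, add_zero]
      exact mul_pos h1 (h2 _ (by linarith))
    · intro y hy
      rw [hsum] at hy
      rw [hJ, Polynomial.eval_mul, Polynomial.eval_comp, Polynomial.eval_comp]
      simp only [Polynomial.eval_sub, Polynomial.eval_add, Polynomial.eval_X, Polynomial.eval_C]
      exact mul_pos (h2 _ (by linarith)) (h2 _ (by linarith))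

lemma backward_nonsquare {E : Type*} [Field E] (of : ℚ →+* E) (θ : E) (τ : E →+* E)
    (τ_of : ∀ c : ℚ, τ (of c) = of c) (τ_root : τ θ = -θ)
    {k : ℕ} (A : Fin (k+1) → ℚ) (x : ℚ)
    (hθ : (fun j => of (A j)) (Fin.last k) = θ ^ 2)
    (hx : (JP (k+1) A).eval x = 0) :
    of ((derivative (JP (k+1) A)).eval x) = 0 := by
  set pE := JP k (fun i => of (A i.castSucc)) with hpE
  have hsuccE : JP (k+1) (fun j => of (A j))
      = pE.comp (Polynomial.X - Polynomial.C θ) * pE.comp (Polynomial.X + Polynomial.C θ) :=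
    JP_succ (fun j => of (A j)) θ hθ
  have hmapτ : Polynomial.map τ pE = pE := by
    have h1 : pE = (JP k (fun i => A i.castSucc)).map of := (JP_map of k _).symm
    rw [h1, Polynomial.map_map]
    congr 1
    ext c
    simp [τ_of]
  have hταz : τ (of x - θ) = of x + θ := by
    rw [map_sub, τ_of, τ_root, sub_neg_eq_add]
  have hτβz : τ (of x + θ) = of x - θ := by
    rw [map_add, τ_of, τ_root, ← sub_eq_add_neg]
  have hτeval : ∀ z : E, τ (pE.eval z) = pE.eval (τ z) := by
    intro z
    rw [← Polynomial.eval₂_at_apply, ← Polynomial.eval_map, hmapτ]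
  have hprod : pE.eval (of x - θ) * pE.eval (of x + θ) = 0 := by
    have h0 : ((JP (k+1) A).map of).eval (of x) = of ((JP (k+1) A).eval x) :=
      by rw [Polynomial.eval_map, Polynomial.eval₂_at_apply]
    rw [JP_map of (k+1) A] at h0
    have h0' : (JP (k+1) (fun j => of (A j))).eval (of x) = 0 := by
      rw [show (fun j => of (A j)) = (⇑of ∘ A) from rfl]
      rw [h0, hx, map_zero]
    rw [hsuccE, Polynomial.eval_mul, Polynomial.eval_comp, Polynomial.eval_comp] at h0'
    simp only [Polynomial.eval_sub, Polynomial.eval_add, Polynomial.eval_X,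
      Polynomial.eval_C] at h0'
    exact h0'
  have hboth : pE.eval (of x - θ) = 0 ∧ pE.eval (of x + θ) = 0 := by
    rcases mul_eq_zero.mp hprod with h | h
    · refine ⟨h, ?_⟩
      have := hτeval (of x - θ)
      rw [h, map_zero, hταz] at this
      exact this.symm
    · refine ⟨?_, h⟩
      have := hτeval (of x + θ)
      rw [h, map_zero, hτβz] at this
      exact this.symm
  have hD : of ((derivative (JP (k+1) A)).eval x)
      = (derivative (JP (k+1) (fun j => of (A j)))).eval (of x) := by
    rw [← Polynomial.eval₂_at_apply, ← Polynomial.eval_map, ← Polynomial.derivative_map,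
      JP_map of (k+1) A]
    rfl
  rw [hD, hsuccE, derivative_mul, derivative_comp, derivative_comp]
  simp only [derivative_sub, derivative_add, derivative_X, derivative_C, sub_zero, add_zero,
    Polynomial.eval_add, Polynomial.eval_mul, Polynomial.eval_comp, Polynomial.eval_one, one_mul,
    Polynomial.eval_sub, Polynomial.eval_X, Polynomial.eval_C]
  rw [hboth.1, hboth.2]
  ring

lemma JP_backward : ∀ (k : ℕ) (A : Fin k → ℚ) (x : ℚ),
    (JP k A).eval x = 0 → (derivative (JP k A)).eval x ≠ 0 →
    ∀ j, ∃ r : ℚ, A j = r ^ 2 := by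
  intro k
  induction k with
  | zero => intro A x _ _ j; exact absurd j.2 (by omega)
  | succ k ih =>
    intro A x hx hdx
    set A' : Fin k → ℚ := fun i => A i.castSucc with hA'
    set p := JP k A' with hp
    by_cases hsq : ∃ s : ℚ, A (Fin.last k) = s ^ 2
    · obtain ⟨s, hs⟩ := hsq
      have hJ := JP_succ A s hs
      rw [hJ] at hx hdx
      rw [Polynomial.eval_mul, Polynomial.eval_comp, Polynomial.eval_comp] at hx
      simp only [Polynomial.eval_sub, Polynomial.eval_add, Polynomial.eval_X,
        Polynomial.eval_C] at hx
      rw [derivative_mul, derivative_comp, derivative_comp] at hdx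
      simp only [derivative_sub, derivative_add, derivative_X, derivative_C, sub_zero, add_zero,
        Polynomial.eval_add, Polynomial.eval_mul, Polynomial.eval_comp, Polynomial.eval_one,
        one_mul, Polynomial.eval_sub, Polynomial.eval_X, Polynomial.eval_C] at hdx
      rcases mul_eq_zero.mp hx with h | h
      · have h2 : (derivative p).eval (x - s) ≠ 0 := by
          intro hz
          apply hdx
          rw [h, hz]
          ring
        have := ih A' (x - s) h h2
        intro j
        refine Fin.lastCases ?_ ?_ j
        · exact ⟨s, hs⟩
        · intro i; exact this i
      · rcases em (p.eval (x - s) = 0) with h' | h'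
        ·
          exfalso
          apply hdx
          rw [h, h']
          ring
        · have h2 : (derivative p).eval (x + s) ≠ 0 := by
            intro hz
            apply hdx
            rw [h, hz]
            ring
          have := ih A' (x + s) h h2
          intro j
          refine Fin.lastCases ?_ ?_ j
          · exact ⟨s, hs⟩
          · intro i; exact this i
    · exfalso
      set a := A (Fin.last k) with ha
      set q : Polynomial ℚ := Polynomial.X ^ 2 - Polynomial.C a with hq
      have hmonic : q.Monic := Polynomial.monic_X_pow_sub_C a (by norm_num)
      have hdeg : q.natDegree = 2 := Polynomial.natDegree_X_pow_sub_C
      have hirr : Irreducible q := by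
        rw [Polynomial.irreducible_iff_roots_eq_zero_of_degree_le_three (by omega) (by omega)]
        rw [Multiset.eq_zero_iff_forall_notMem]
        intro z hz
        rw [Polynomial.mem_roots (hmonic.ne_zero)] at hz
        apply hsq
        refine ⟨z, ?_⟩
        rw [Polynomial.IsRoot, hq, Polynomial.eval_sub, Polynomial.eval_pow,
          Polynomial.eval_X, Polynomial.eval_C] at hz
        linarith [hz]
      haveI : Fact (Irreducible q) := ⟨hirr⟩
      have hθ : (AdjoinRoot.root q) ^ 2 = AdjoinRoot.of q a := by
        have h0 : Polynomial.eval₂ (AdjoinRoot.of q) (AdjoinRoot.root q)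
            (Polynomial.X ^ 2 - Polynomial.C a) = 0 := AdjoinRoot.eval₂_root q
        rw [Polynomial.eval₂_sub, Polynomial.eval₂_pow, Polynomial.eval₂_X,
          Polynomial.eval₂_C] at h0
        linear_combination h0
      have hτ0 : Polynomial.eval₂ (AdjoinRoot.of q) (-(AdjoinRoot.root q)) q = 0 := by
        show Polynomial.eval₂ (AdjoinRoot.of q) (-(AdjoinRoot.root q))
          (Polynomial.X ^ 2 - Polynomial.C a) = 0
        rw [Polynomial.eval₂_sub, Polynomial.eval₂_pow, Polynomial.eval₂_X,
          Polynomial.eval₂_C, neg_pow, hθ]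
        ring
      have key := backward_nonsquare (AdjoinRoot.of q) (AdjoinRoot.root q)
        (AdjoinRoot.lift (AdjoinRoot.of q) (-(AdjoinRoot.root q)) hτ0)
        (fun c => AdjoinRoot.lift_of hτ0) (AdjoinRoot.lift_root hτ0)
        A x hθ.symm hx
      exact hdx ((AdjoinRoot.of q).injective (by rw [key, map_zero]))

end JPwork

open JPwork

theorem good_set_diophantine (T : Set ℚ) (m ℓ : ℕ)
    (f : MvPolynomial (Fin (m + 1)) ℤ)
    (g : Fin ℓ → MvPolynomial (Fin (m + 1)) ℤ)
    (hT : ∀ t : ℚ, t ∈ T ↔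
        ∃ x : Fin m → ℚ,
          MvPolynomial.aeval (Fin.cons t x) f = 0 ∧
            ∀ j, ∃ r : ℚ, r ≠ 0 ∧ MvPolynomial.aeval (Fin.cons t x) (g j) = r ^ 2) :
    ∃ P : MvPolynomial (Fin (m + 3)) ℤ,
      ∀ t : ℚ, t ∈ T ↔ ∃ x : Fin (m + 2) → ℚ, MvPolynomial.aeval (Fin.cons t x) P = 0 := by
  classical
  have h13 : m + 1 ≤ m + 3 := by omega
  have h02 : m ≤ m + 2 := by omega
  set ι : Fin (m+1) → Fin (m+3) := Fin.castLE h13 with hι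
  set Y : MvPolynomial (Fin (m+3)) ℤ := MvPolynomial.X ⟨m+1, by omega⟩ with hY
  set Z : MvPolynomial (Fin (m+3)) ℤ := MvPolynomial.X ⟨m+2, by omega⟩ with hZ
  set G : Fin ℓ → MvPolynomial (Fin (m+3)) ℤ := fun j => MvPolynomial.rename ι (g j) with hG
  set Jpoly : Polynomial (MvPolynomial (Fin (m+3)) ℤ) := JP ℓ G with hJpoly
  set P : MvPolynomial (Fin (m+3)) ℤ :=
    (MvPolynomial.rename ι f)^2 + (Jpoly.eval Y)^2
      + (Z * (∏ j, G j) * ((derivative Jpoly).eval Y) - 1)^2 with hP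
  refine ⟨P, fun t => ?_⟩
  -- evaluation lemma
  have hEval : ∀ xf : Fin (m+2) → ℚ,
      (MvPolynomial.aeval (Fin.cons t xf) P : ℚ)
        = (MvPolynomial.aeval (Fin.cons t (fun i => xf (Fin.castLE h02 i))) f : ℚ)^2
          + ((JP ℓ (fun j => (MvPolynomial.aeval (Fin.cons t (fun i => xf (Fin.castLE h02 i))) (g j) : ℚ))).eval (xf ⟨m, by omega⟩))^2
          + (xf ⟨m+1, by omega⟩
              * (∏ j, (MvPolynomial.aeval (Fin.cons t (fun i => xf (Fin.castLE h02 i))) (g j) : ℚ))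
              * ((derivative (JP ℓ (fun j => (MvPolynomial.aeval (Fin.cons t (fun i => xf (Fin.castLE h02 i))) (g j) : ℚ)))).eval (xf ⟨m, by omega⟩))
             - 1)^2 := by
    intro xf
    set v : Fin (m+3) → ℚ := Fin.cons t xf with hv
    set w : Fin (m+1) → ℚ := Fin.cons t (fun i => xf (Fin.castLE h02 i)) with hw
    have hcomp : v ∘ ι = w := by
      funext i
      refine Fin.cases ?_ ?_ i
      · simp [hv, hw, hι]
      · intro j
        have hcast : ι (Fin.succ j) = Fin.succ (Fin.castLE h02 j) := by
          ext; simp [hι]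
        rw [Function.comp_apply, hcast, hv, hw, Fin.cons_succ, Fin.cons_succ]
    have hrename : ∀ p : MvPolynomial (Fin (m+1)) ℤ,
        (MvPolynomial.aeval v (MvPolynomial.rename ι p) : ℚ) = MvPolynomial.aeval w p := by
      intro p
      rw [MvPolynomial.aeval_rename, hcomp]
    have hYv : (MvPolynomial.aeval v Y : ℚ) = xf ⟨m, by omega⟩ := by
      rw [hY, MvPolynomial.aeval_X]
      show (Fin.cons t xf : Fin (m+3) → ℚ) (Fin.succ (⟨m, by omega⟩ : Fin (m+2))) = _
      rw [Fin.cons_succ]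
    have hZv : (MvPolynomial.aeval v Z : ℚ) = xf ⟨m+1, by omega⟩ := by
      rw [hZ, MvPolynomial.aeval_X]
      show (Fin.cons t xf : Fin (m+3) → ℚ) (Fin.succ (⟨m+1, by omega⟩ : Fin (m+2))) = _
      rw [Fin.cons_succ]
    set ψ : MvPolynomial (Fin (m+3)) ℤ →+* ℚ := (MvPolynomial.aeval v).toRingHom with hψ
    have hGval : (ψ ∘ G) = fun j => (MvPolynomial.aeval w (g j) : ℚ) := by
      funext j
      exact hrename (g j)
    have hJv : ψ (Jpoly.eval Y)
        = (JP ℓ (fun j => (MvPolynomial.aeval w (g j) : ℚ))).eval (xf ⟨m, by omega⟩) := by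
      rw [← Polynomial.eval₂_at_apply, ← Polynomial.eval_map, hJpoly, JP_map ψ ℓ G, hGval,
        show ψ Y = xf ⟨m, by omega⟩ from hYv]
    have hJ'v : ψ ((derivative Jpoly).eval Y)
        = (derivative (JP ℓ (fun j => (MvPolynomial.aeval w (g j) : ℚ)))).eval
            (xf ⟨m, by omega⟩) := by
      rw [← Polynomial.eval₂_at_apply, ← Polynomial.eval_map, ← Polynomial.derivative_map,
        hJpoly, JP_map ψ ℓ G, hGval, show ψ Y = xf ⟨m, by omega⟩ from hYv]
    show ψ P = _
    rw [hP]
    rw [map_add, map_add, map_pow, map_pow, map_pow, map_sub, map_one, map_mul, map_mul,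
      map_prod]
    rw [hJv, hJ'v]
    have : ∀ j, ψ (G j) = MvPolynomial.aeval w (g j) := fun j => hrename (g j)
    simp only [this]
    have hf : ψ (MvPolynomial.rename ι f) = MvPolynomial.aeval w f := hrename f
    rw [hf, show ψ Z = xf ⟨m+1, by omega⟩ from hZv]
  constructor
  · -- t ∈ T → ∃ xf
    intro ht
    obtain ⟨xs, hf0, hsq⟩ := (hT t).mp ht
    choose rr hrr0 hrr2 using hsq
    set ρ : Fin ℓ → ℚ := fun j => |rr j| with hρ
    have hρpos : ∀ j, 0 < ρ j := fun j => abs_pos.mpr (hrr0 j)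
    have hA : ∀ j, (MvPolynomial.aeval (Fin.cons t xs) (g j) : ℚ) = ρ j ^ 2 := by
      intro j; rw [hrr2 j, hρ, sq_abs]
    obtain ⟨hJ0, hJ'pos, -⟩ := JP_forward ℓ ρ hρpos
    have hAfun' : (fun j => (MvPolynomial.aeval (Fin.cons t xs) (g j) : ℚ))
        = fun j => ρ j ^ 2 := funext hA
    have hDne : (∏ j, ρ j ^ 2)
        * (derivative (JP ℓ (fun j => ρ j ^ 2))).eval (∑ j, ρ j) ≠ 0 := by
      refine mul_ne_zero ?_ (ne_of_gt hJ'pos)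
      refine Finset.prod_ne_zero_iff.mpr fun j _ => ?_
      exact pow_ne_zero 2 (ne_of_gt (hρpos j))
    refine ⟨Fin.snoc (Fin.snoc xs (∑ j, ρ j))
      (((∏ j, ρ j ^ 2) * (derivative (JP ℓ (fun j => ρ j ^ 2))).eval (∑ j, ρ j))⁻¹), ?_⟩
    set zval : ℚ :=
      ((∏ j, ρ j ^ 2) * (derivative (JP ℓ (fun j => ρ j ^ 2))).eval (∑ j, ρ j))⁻¹ with hzval
    set xf : Fin (m+2) → ℚ := Fin.snoc (Fin.snoc xs (∑ j, ρ j)) zval with hxf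
    have hxs : (fun i => xf (Fin.castLE h02 i)) = xs := by
      funext i
      have h1 : (Fin.castLE h02 i : Fin (m+2)) = Fin.castSucc (Fin.castSucc i) := by
        ext; simp
      rw [h1, hxf, Fin.snoc_castSucc, Fin.snoc_castSucc]
    have hxm : xf ⟨m, by omega⟩ = ∑ j, ρ j := by
      have h1 : (⟨m, by omega⟩ : Fin (m+2)) = Fin.castSucc (Fin.last m) := by
        ext; simp
      rw [h1, hxf, Fin.snoc_castSucc, Fin.snoc_last]
    have hxlast : xf ⟨m+1, by omega⟩ = zval := by
      have h1 : (⟨m+1, by omega⟩ : Fin (m+2)) = Fin.last (m+1) := by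
        ext; simp
      rw [h1, hxf, Fin.snoc_last]
    rw [hEval xf, hxs, hxm, hxlast, hf0, hAfun', hJ0, hzval, mul_assoc,
      inv_mul_cancel₀ hDne]
    norm_num
  · -- backward
    intro ⟨xf, hxf⟩
    rw [hEval xf] at hxf
    set w : Fin m → ℚ := fun i => xf (Fin.castLE h02 i) with hw
    set a1 : ℚ := MvPolynomial.aeval (Fin.cons t w) f with ha1
    set Aval : Fin ℓ → ℚ := fun j => (MvPolynomial.aeval (Fin.cons t w) (g j) : ℚ) with hAval
    set ystar : ℚ := xf ⟨m, by omega⟩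
    set a2 : ℚ := (JP ℓ Aval).eval ystar with ha2
    set a3 : ℚ := xf ⟨m+1, by omega⟩ * (∏ j, Aval j)
      * (derivative (JP ℓ Aval)).eval ystar - 1 with ha3
    have h123 : a1^2 + a2^2 + a3^2 = 0 := hxf
    have h1 : a1 = 0 := by nlinarith [sq_nonneg a1, sq_nonneg a2, sq_nonneg a3]
    have h2 : a2 = 0 := by nlinarith [sq_nonneg a1, sq_nonneg a2, sq_nonneg a3]
    have h3 : a3 = 0 := by nlinarith [sq_nonneg a1, sq_nonneg a2, sq_nonneg a3]
    have hmul : xf ⟨m+1, by omega⟩ * (∏ j, Aval j)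
        * (derivative (JP ℓ Aval)).eval ystar = 1 := by
      rw [ha3] at h3; linarith
    have hprodne : (∏ j, Aval j) ≠ 0 := by
      intro h
      rw [h] at hmul; simp at hmul
    have hJ'ne : (derivative (JP ℓ Aval)).eval ystar ≠ 0 := by
      intro h
      rw [h] at hmul; simp at hmul
    have hsq := JP_backward ℓ Aval ystar h2 hJ'ne
    refine (hT t).mpr ⟨w, h1, fun j => ?_⟩
    obtain ⟨r, hr⟩ := hsq j
    refine ⟨r, ?_, hr⟩
    intro hr0
    apply hprodne
    refine Finset.prod_eq_zero (Finset.mem_univ j) ?_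
    rw [hr, hr0]
    norm_num
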